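/- arXiv:2511.00168 — 2 statements merged into one kernel-verified Lean document; each statement's English description precedes it below -/
import Mathlib

section
/- If 0 is a global minimizer of M(s) = f0 + gᵀs + (1/2)sᵀHs + (β/6)‖s‖³ + (σ/4)‖s‖⁴ (σ ≥ 0), then M(s) - f0 can be written as (1/2)sᵀ(H - λ_min I)s + p(‖s‖)² + ‖s‖ q(‖s‖)² for some polynomials p of degree ≤ 2 and q of degree ≤ 1, where λ_min is the smallest eigenvalue of H and H - λ_min I ⪰ 0. -/
open Matrix Polynomial

noncomputable def enormFin {n : ℕ} (s : Fin n → ℝ) : ℝ := Real.sqrt (s ⬝ᵥ s)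

noncomputable def Mfun {n : ℕ} (f0 : ℝ) (g : Fin n → ℝ)
    (H : Matrix (Fin n) (Fin n) ℝ) (β σ : ℝ) (s : Fin n → ℝ) : ℝ :=
  f0 + g ⬝ᵥ s + (1/2) * (s ⬝ᵥ (H *ᵥ s)) + (β/6) * enormFin s ^ 3 + (σ/4) * enormFin s ^ 4

noncomputable def Bmat {n : ℕ} (H : Matrix (Fin n) (Fin n) ℝ) (β σ : ℝ)
    (s : Fin n → ℝ) : Matrix (Fin n) (Fin n) ℝ :=
  H + ((β/2) * enormFin s) • (1 : Matrix (Fin n) (Fin n) ℝ)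
    + (σ * enormFin s ^ 2) • (1 : Matrix (Fin n) (Fin n) ℝ)

lemma lim_le (c a b d : ℝ) (h : ∀ t : ℝ, 0 < t → t ≤ 1 → c ≤ t*a + t^2*b + t^3*d) :
    c ≤ 0 := by
  by_contra hc
  push_neg at hc
  set S : ℝ := |a| + |b| + |d| + 1 with hSdef
  have hS0 : 0 < S := by positivity
  have haS : a ≤ S := by nlinarith [le_abs_self a, abs_nonneg b, abs_nonneg d]
  have hbS : b ≤ S := by nlinarith [le_abs_self b, abs_nonneg a, abs_nonneg d]
  have hdS : d ≤ S := by nlinarith [le_abs_self d, abs_nonneg a, abs_nonneg b]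
  set t : ℝ := min 1 (c/(6*S)) with htdef
  have ht0 : 0 < t := lt_min one_pos (by positivity)
  have ht1 : t ≤ 1 := min_le_left _ _
  have ht2 : t ≤ c/(6*S) := min_le_right _ _
  have h1 := h t ht0 ht1
  have htt : t^2 ≤ t := by nlinarith
  have httt : t^3 ≤ t := by nlinarith
  have ha : t*a ≤ t*S := mul_le_mul_of_nonneg_left haS ht0.le
  have hb : t^2*b ≤ t*S :=
    le_trans (mul_le_mul_of_nonneg_left hbS (sq_nonneg t))
      (mul_le_mul_of_nonneg_right htt hS0.le)
  have hd : t^3*d ≤ t*S :=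
    le_trans (mul_le_mul_of_nonneg_left hdS (pow_nonneg ht0.le 3))
      (mul_le_mul_of_nonneg_right httt hS0.le)
  have ht2' : t*S ≤ c/6 := by
    rw [le_div_iff₀ (by positivity : (0:ℝ) < 6*S)] at ht2
    nlinarith
  nlinarith [h1, ha, hb, hd, ht2', hc]

lemma dot_self_nonneg {n : ℕ} (s : Fin n → ℝ) : 0 ≤ s ⬝ᵥ s :=
  Finset.sum_nonneg fun _ _ => mul_self_nonneg _

lemma enormFin_smul {n : ℕ} (c : ℝ) (s : Fin n → ℝ) : enormFin (c • s) = |c| * enormFin s := by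
  unfold enormFin
  rw [smul_dotProduct, dotProduct_smul, smul_eq_mul, smul_eq_mul, ← mul_assoc,
    ← sq, Real.sqrt_mul (sq_nonneg c), Real.sqrt_sq_eq_abs]

lemma enorm_sq {n : ℕ} (s : Fin n → ℝ) : enormFin s ^ 2 = s ⬝ᵥ s :=
  Real.sq_sqrt (dot_self_nonneg s)

lemma quad_nonneg (A B C : ℝ) (hA : 0 ≤ A) (hC : 0 ≤ C)
    (h : ∀ r : ℝ, 0 ≤ r → 0 ≤ C*r^2 + B*r^3 + A*r^4) :
    0 ≤ B + 2*Real.sqrt A*Real.sqrt C := by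
  have hsa : Real.sqrt A ^ 2 = A := Real.sq_sqrt hA
  have hsc : Real.sqrt C ^ 2 = C := Real.sq_sqrt hC
  have hx0 : 0 ≤ 2*Real.sqrt A*Real.sqrt C := by positivity
  by_contra hneg
  push_neg at hneg
  have hB : B < 0 := by linarith
  have hψ : ∀ r : ℝ, 0 < r → 0 ≤ C + B*r + A*r^2 := by
    intro r hr
    nlinarith [h r hr.le, mul_pos hr hr, sq_nonneg r]
  rcases eq_or_lt_of_le hA with hA0 | hA0
  · -- A = 0
    have hr : 0 < (C+1)/(-B) := div_pos (by linarith) (by linarith)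
    have h1 := hψ _ hr
    have h2 : B * ((C+1)/(-B)) = -(C+1) := by
      rw [mul_div_assoc', div_eq_iff (by linarith : (-B) ≠ 0)]; ring
    nlinarith [h1, h2, sq_nonneg ((C+1)/(-B))]
  · -- 0 < A
    have hB2 : B^2 > 4*A*C := by
      have h1 : 0 < -(B + 2*Real.sqrt A*Real.sqrt C) := by linarith
      have h2 : 0 < -(B - 2*Real.sqrt A*Real.sqrt C) := by linarith
      nlinarith [mul_pos h1 h2]
    set r : ℝ := -B/(2*A) with hrdef
    have hr : 0 < r := div_pos (by linarith) (by linarith)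
    have hr2 : 2*A*r = -B := by rw [hrdef]; field_simp
    have h1 := hψ r hr
    nlinarith [h1, hr2, hB2, hA0, sq_nonneg r]

theorem stmt8 {n : ℕ} (f0 : ℝ) (g : Fin n → ℝ) (H : Matrix (Fin n) (Fin n) ℝ)
    (hH : H.IsSymm) (β σ : ℝ) (hσ : 0 ≤ σ) (lamMin : ℝ)
    (heig : ∃ v : Fin n → ℝ, v ≠ 0 ∧ H *ᵥ v = lamMin • v)
    (hlow : ∀ v : Fin n → ℝ, lamMin * (v ⬝ᵥ v) ≤ v ⬝ᵥ (H *ᵥ v))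
    (hmin : ∀ s : Fin n → ℝ, Mfun f0 g H β σ 0 ≤ Mfun f0 g H β σ s) :
    (H - lamMin • (1 : Matrix (Fin n) (Fin n) ℝ)).PosSemidef ∧
    ∃ p q : Polynomial ℝ, p.degree ≤ 2 ∧ q.degree ≤ 1 ∧
      ∀ s : Fin n → ℝ,
        Mfun f0 g H β σ s - f0 =
          (1/2) * (s ⬝ᵥ ((H - lamMin • (1 : Matrix (Fin n) (Fin n) ℝ)) *ᵥ s))
            + (p.eval (enormFin s))^2 + enormFin s * (q.eval (enormFin s))^2 := by
  obtain ⟨v, hv0, hvv⟩ := heig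
  have hM0 : Mfun f0 g H β σ 0 = f0 := by
    simp [Mfun, enormFin]
  -- Step 1 : g = 0
  have hg : g = 0 := by
    by_contra hgne
    have hcne : g ⬝ᵥ g ≠ 0 := fun h => hgne (dotProduct_self_eq_zero.mp h)
    have hc : 0 < g ⬝ᵥ g := lt_of_le_of_ne (dot_self_nonneg g) (Ne.symm hcne)
    set e : ℝ := enormFin g with hedef
    set K : ℝ := g ⬝ᵥ (H *ᵥ g) with hKdef
    have key : ∀ t : ℝ, 0 < t → t ≤ 1 →
        (g ⬝ᵥ g) ≤ t*((1/2)*K) + t^2*((β/6)*e^3) + t^3*((σ/4)*e^4) := by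
      intro t ht0 ht1
      have h1 := hmin ((-t) • g)
      rw [hM0] at h1
      unfold Mfun at h1
      rw [dotProduct_smul, mulVec_smul, smul_dotProduct, dotProduct_smul,
        enormFin_smul, abs_neg, abs_of_pos ht0] at h1
      simp only [smul_eq_mul] at h1
      nlinarith [h1, mul_pos ht0 ht0]
    have := lim_le (g ⬝ᵥ g) ((1/2)*K) ((β/6)*e^3) ((σ/4)*e^4) key
    linarith
  subst hg
  -- Step 2 : the scalar function is nonnegative
  have hvvpos : 0 < v ⬝ᵥ v :=
    lt_of_le_of_ne (dot_self_nonneg v)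
      (Ne.symm fun h => hv0 (dotProduct_self_eq_zero.mp h))
  have hw : 0 < enormFin v := Real.sqrt_pos.mpr hvvpos
  set w : ℝ := enormFin v with hwdef
  have hvv2 : v ⬝ᵥ v = w^2 := (enorm_sq v).symm
  have hphi : ∀ r : ℝ, 0 ≤ r →
      0 ≤ (lamMin/2)*r^2 + (β/6)*r^3 + (σ/4)*r^4 := by
    intro r hr
    rcases hr.eq_or_lt with h0 | hr
    · simp [← h0]
    have h1 := hmin ((r/w) • v)
    rw [hM0] at h1
    unfold Mfun at h1
    rw [mulVec_smul, hvv, enormFin_smul, abs_of_pos (div_pos hr hw)] at h1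
    simp only [smul_dotProduct, dotProduct_smul, smul_eq_mul, zero_dotProduct] at h1
    rw [← hwdef, hvv2] at h1
    have hrw : r/w * w = r := by field_simp
    rw [hrw] at h1
    have hq : r/w * (r/w * (lamMin * w^2)) = lamMin * r^2 := by
      field_simp
    nlinarith [h1, hq]
  -- Step 3 : lamMin ≥ 0
  have hlam : 0 ≤ lamMin := by
    have key : ∀ t : ℝ, 0 < t → t ≤ 1 →
        -(lamMin/2) ≤ t*(β/6) + t^2*(σ/4) + t^3*0 := by
      intro t ht0 _
      nlinarith [hphi t ht0.le, mul_pos ht0 ht0]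
    have := lim_le _ _ _ _ key
    linarith
  -- Step 4 : the SOS certificate
  set a : ℝ := Real.sqrt (σ/4) with hadef
  set cc : ℝ := Real.sqrt (lamMin/2) with hccdef
  have ha2 : a^2 = σ/4 := Real.sq_sqrt (by linarith)
  have hcc2 : cc^2 = lamMin/2 := Real.sq_sqrt (by linarith)
  have hD : 0 ≤ β/6 + 2*a*cc := by
    have := quad_nonneg (σ/4) (β/6) (lamMin/2) (by linarith) (by linarith)
      (fun r hr => by nlinarith [hphi r hr])
    rwa [hadef, hccdef]
  have hsd : Real.sqrt (β/6 + 2*a*cc) ^ 2 = β/6 + 2*a*cc := Real.sq_sqrt hD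
  constructor
  · rw [posSemidef_iff_dotProduct_mulVec]; constructor
    · -- Hermitian
      ext i j
      simp only [conjTranspose_apply, Matrix.sub_apply, Matrix.smul_apply, one_apply, smul_eq_mul,
        star_sub, star_mul', star_one, star_trivial]
      rw [hH.apply i j]
      by_cases hij : i = j <;> simp [hij, eq_comm]
    · intro x
      have hx : star x = x := by
        funext i; simp
      rw [hx, sub_mulVec, smul_mulVec, one_mulVec, dotProduct_sub,
        dotProduct_smul, smul_eq_mul]
      have := hlow x
      linarith
  · refine ⟨Polynomial.C a * X^2 - Polynomial.C cc * X,
      Polynomial.C (Real.sqrt (β/6 + 2*a*cc)) * X, ?_, ?_, ?_⟩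
    · compute_degree
    · compute_degree
    · intro s
      have hss : s ⬝ᵥ s = enormFin s ^ 2 := (enorm_sq s).symm
      have expand : s ⬝ᵥ ((H - lamMin • 1) *ᵥ s)
          = s ⬝ᵥ (H *ᵥ s) - lamMin * (s ⬝ᵥ s) := by
        rw [sub_mulVec, smul_mulVec, one_mulVec, dotProduct_sub,
          dotProduct_smul, smul_eq_mul]
      unfold Mfun
      rw [expand, hss]
      simp only [eval_mul, eval_sub, eval_pow, eval_C, eval_X, zero_dotProduct]
      set r : ℝ := enormFin s
      linear_combination (-r^4)*ha2 - r^2*hcc2 - r^3*hsd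
end

section
/- Let σ, β ∈ ℝ not both zero, σ ≥ 0, and suppose M(s) - μ* = (1,s)ᵀX(1,s) + p(‖s‖)² + ‖s‖q(‖s‖)² for all s ∈ ℝⁿ with X ⪰ 0, deg p ≤ 2, deg q ≤ 1, μ* the minimum value of M. If ŝ and s* are two global minimizers of M, then ‖ŝ‖ · ‖s*‖ · (‖ŝ‖ - ‖s*‖) = 0; that is, all nonzero global minimizers have the same Euclidean norm. -/
open Matrix Polynomial

private lemma dot_self_nonneg_s15 {m : ℕ} (v : Fin m → ℝ) : 0 ≤ v ⬝ᵥ v :=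
  Finset.sum_nonneg fun i _ => mul_self_nonneg (v i)

private lemma poly4_coeffs (c0 c1 c2 c3 c4 : ℝ)
    (h : ∀ t : ℝ, 0 ≤ t → c0 + c1*t + c2*t^2 + c3*t^3 + c4*t^4 = 0) :
    c0 = 0 ∧ c1 = 0 ∧ c2 = 0 ∧ c3 = 0 ∧ c4 = 0 := by
  have h0 := h 0 (by norm_num)
  have h1 := h 1 (by norm_num)
  have h2 := h 2 (by norm_num)
  have h3 := h 3 (by norm_num)
  have h4 := h 4 (by norm_num)
  norm_num at h0 h1 h2 h3 h4
  refine ⟨by linarith, by linarith, by linarith, by linarith, by linarith⟩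

set_option maxHeartbeats 1000000 in
theorem stmt15 {n : ℕ} (f0 : ℝ) (g : Fin n → ℝ) (H : Matrix (Fin n) (Fin n) ℝ)
    (hH : H.IsSymm) (β σ : ℝ) (hσ : 0 ≤ σ) (hne : ¬ (σ = 0 ∧ β = 0))
    (μstar : ℝ) (hmin : ∀ s : Fin n → ℝ, μstar ≤ Mfun f0 g H β σ s)
    (hrep : ∃ (X : Matrix (Fin (n+1)) (Fin (n+1)) ℝ) (p q : Polynomial ℝ),
      X.PosSemidef ∧ p.degree ≤ 2 ∧ q.degree ≤ 1 ∧
      ∀ s : Fin n → ℝ,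
        Mfun f0 g H β σ s - μstar =
          (Fin.cons 1 s) ⬝ᵥ (X *ᵥ (Fin.cons 1 s))
            + (p.eval (enormFin s))^2 + enormFin s * (q.eval (enormFin s))^2)
    (shat sstar : Fin n → ℝ)
    (h1 : Mfun f0 g H β σ shat = μstar)
    (h2 : Mfun f0 g H β σ sstar = μstar) :
    enormFin shat * enormFin sstar * (enormFin shat - enormFin sstar) = 0 := by
  by_contra hcon
  obtain ⟨X, p, q, hX, hpdeg, hqdeg, hid⟩ := hrep
  have hr1 : enormFin shat ≠ 0 := fun h => hcon (by rw [h]; ring)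
  have hr2 : enormFin sstar ≠ 0 := fun h => hcon (by rw [h]; ring)
  have hr12 : enormFin shat ≠ enormFin sstar := fun h => hcon (by rw [h]; ring)
  have hr1nn : (0:ℝ) ≤ enormFin shat := Real.sqrt_nonneg _
  have hr2nn : (0:ℝ) ≤ enormFin sstar := Real.sqrt_nonneg _
  have hr1pos : 0 < enormFin shat := lt_of_le_of_ne hr1nn (Ne.symm hr1)
  have hr2pos : 0 < enormFin sstar := lt_of_le_of_ne hr2nn (Ne.symm hr2)
  have hr1sq : (enormFin shat)^2 = shat ⬝ᵥ shat := by
    simp only [enormFin]; exact Real.sq_sqrt (dot_self_nonneg_s15 shat)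
  have hr2sq : (enormFin sstar)^2 = sstar ⬝ᵥ sstar := by
    simp only [enormFin]; exact Real.sq_sqrt (dot_self_nonneg_s15 sstar)
  have hQnn : ∀ x : Fin (n+1) → ℝ, 0 ≤ x ⬝ᵥ X *ᵥ x := fun x => by simpa using hX.dotProduct_mulVec_nonneg x
  -- splitting into zero parts at a minimizer
  have split : ∀ s : Fin n → ℝ, Mfun f0 g H β σ s = μstar → enormFin s ≠ 0 →
      (Fin.cons 1 s) ⬝ᵥ X *ᵥ (Fin.cons 1 s) = 0 ∧ p.eval (enormFin s) = 0 ∧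
        q.eval (enormFin s) = 0 := by
    intro s hs hsne
    have h := hid s
    rw [hs, sub_self] at h
    have hQ := hQnn (Fin.cons 1 s)
    have hsp := sq_nonneg (p.eval (enormFin s))
    have hsq' := sq_nonneg (q.eval (enormFin s))
    have hsnn : (0:ℝ) ≤ enormFin s := Real.sqrt_nonneg _
    have hmul : 0 ≤ enormFin s * (q.eval (enormFin s))^2 := mul_nonneg hsnn hsq'
    have hQ0 : (Fin.cons 1 s) ⬝ᵥ X *ᵥ (Fin.cons 1 s) = 0 := by linarith
    have hp0 : (p.eval (enormFin s))^2 = 0 := by linarith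
    have hq0 : enormFin s * (q.eval (enormFin s))^2 = 0 := by linarith
    refine ⟨hQ0, sq_eq_zero_iff.mp hp0, ?_⟩
    have hq0' : (q.eval (enormFin s))^2 = 0 := by
      rcases mul_eq_zero.mp hq0 with h' | h'
      · exact absurd h' hsne
      · exact h'
    exact sq_eq_zero_iff.mp hq0'
  obtain ⟨hQhat, hpr1', hqr1'⟩ := split shat h1 hr1
  obtain ⟨hQstar, hpr2', hqr2'⟩ := split sstar h2 hr2
  -- q is identically zero
  have hqrep := Polynomial.eq_X_add_C_of_degree_le_one hqdeg
  have hqev : ∀ x : ℝ, q.eval x = q.coeff 1 * x + q.coeff 0 := by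
    intro x; conv_lhs => rw [hqrep]
    simp
  have hd0 : q.coeff 1 = 0 := by
    have e1 : q.coeff 1 * enormFin shat + q.coeff 0 = 0 := by rw [← hqev]; exact hqr1'
    have e2 : q.coeff 1 * enormFin sstar + q.coeff 0 = 0 := by rw [← hqev]; exact hqr2'
    have h' : q.coeff 1 * (enormFin shat - enormFin sstar) = 0 := by linear_combination e1 - e2
    rcases mul_eq_zero.mp h' with h'' | h''
    · exact h''
    · exact absurd (sub_eq_zero.mp h'') hr12
  have he0 : q.coeff 0 = 0 := by
    have e1 : q.coeff 1 * enormFin shat + q.coeff 0 = 0 := by rw [← hqev]; exact hqr1'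
    rw [hd0] at e1; linarith
  have hqz : ∀ x : ℝ, q.eval x = 0 := by
    intro x; rw [hqev, hd0, he0]; ring
  -- p eval formula
  have hpnat : p.natDegree < 3 :=
    lt_of_le_of_lt (Polynomial.natDegree_le_iff_degree_le.mpr hpdeg) (by norm_num)
  set a := p.coeff 2 with hadef
  set b := p.coeff 1 with hbdef
  set c := p.coeff 0 with hcdef
  have hpev : ∀ x : ℝ, p.eval x = c + b*x + a*x^2 := by
    intro x
    rw [Polynomial.eval_eq_sum_range' hpnat x]
    rw [Finset.sum_range_succ, Finset.sum_range_succ, Finset.sum_range_one]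
    ring
  have hpr1 : c + b*(enormFin shat) + a*(enormFin shat)^2 = 0 := by rw [← hpev]; exact hpr1'
  have hpr2 : c + b*(enormFin sstar) + a*(enormFin sstar)^2 = 0 := by rw [← hpev]; exact hpr2'
  -- ray expansions
  have hconsray : ∀ t : ℝ, (Fin.cons 1 (t • shat) : Fin (n+1) → ℝ) =
      (Fin.cons 1 (0:Fin n → ℝ)) + t • (Fin.cons 0 shat : Fin (n+1) → ℝ) := by
    intro t; funext i
    refine Fin.cases ?_ (fun j => ?_) i <;>
      simp [Pi.add_apply, Pi.smul_apply, smul_eq_mul]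
  have hQray : ∀ t : ℝ, (Fin.cons 1 (t • shat)) ⬝ᵥ X *ᵥ (Fin.cons 1 (t • shat)) =
      (Fin.cons 1 (0:Fin n → ℝ)) ⬝ᵥ X *ᵥ (Fin.cons 1 (0:Fin n → ℝ))
      + ((Fin.cons 1 (0:Fin n → ℝ)) ⬝ᵥ X *ᵥ (Fin.cons 0 shat : Fin (n+1) → ℝ)
         + (Fin.cons 0 shat : Fin (n+1) → ℝ) ⬝ᵥ X *ᵥ (Fin.cons 1 (0:Fin n → ℝ))) * t
      + ((Fin.cons 0 shat : Fin (n+1) → ℝ) ⬝ᵥ X *ᵥ (Fin.cons 0 shat : Fin (n+1) → ℝ)) * t^2 := by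
    intro t
    rw [hconsray]
    simp only [mulVec_add, mulVec_smul, dotProduct_add, add_dotProduct,
      dotProduct_smul, smul_dotProduct, smul_eq_mul]
    ring
  have henray : ∀ t : ℝ, 0 ≤ t → enormFin (t • shat) = t * enormFin shat := by
    intro t ht
    have hd : (t • shat) ⬝ᵥ (t • shat) = (t * enormFin shat)^2 := by
      have : (t • shat) ⬝ᵥ (t • shat) = t * (t * (shat ⬝ᵥ shat)) := by
        simp [smul_dotProduct, dotProduct_smul, smul_eq_mul]
      rw [this, ← hr1sq]; ring
    show Real.sqrt ((t • shat) ⬝ᵥ (t • shat)) = t * enormFin shat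
    rw [hd]
    exact Real.sqrt_sq (mul_nonneg ht hr1nn)
  have hMray : ∀ t : ℝ, 0 ≤ t → Mfun f0 g H β σ (t • shat) =
      f0 + (g ⬝ᵥ shat) * t + (1/2) * (shat ⬝ᵥ (H *ᵥ shat)) * t^2
        + (β/6) * (t * enormFin shat)^3 + (σ/4) * (t * enormFin shat)^4 := by
    intro t ht
    simp only [Mfun, henray t ht, dotProduct_smul, smul_dotProduct, mulVec_smul,
      smul_eq_mul]
    ring
  have key : ∀ t : ℝ, 0 ≤ t →
      (f0 - μstar - (Fin.cons 1 (0:Fin n → ℝ)) ⬝ᵥ X *ᵥ (Fin.cons 1 (0:Fin n → ℝ)) - c^2)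
      + ((g ⬝ᵥ shat) - ((Fin.cons 1 (0:Fin n → ℝ)) ⬝ᵥ X *ᵥ (Fin.cons 0 shat : Fin (n+1) → ℝ)
           + (Fin.cons 0 shat : Fin (n+1) → ℝ) ⬝ᵥ X *ᵥ (Fin.cons 1 (0:Fin n → ℝ)))
          - 2*b*c*(enormFin shat))*t
      + ((1/2)*(shat ⬝ᵥ (H *ᵥ shat)) - (Fin.cons 0 shat : Fin (n+1) → ℝ) ⬝ᵥ X *ᵥ (Fin.cons 0 shat : Fin (n+1) → ℝ)
          - (b^2+2*a*c)*(enormFin shat)^2)*t^2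
      + ((β/6 - 2*a*b)*(enormFin shat)^3)*t^3
      + ((σ/4 - a^2)*(enormFin shat)^4)*t^4 = 0 := by
    intro t ht
    have h := hid (t • shat)
    rw [hMray t ht, hQray t, henray t ht, hpev, hqz] at h
    linear_combination h
  obtain ⟨-, -, -, hC3, hC4⟩ := poly4_coeffs _ _ _ _ _ key
  have hb3 : β/6 - 2*a*b = 0 := by
    rcases mul_eq_zero.mp hC3 with h' | h'
    · exact h'
    · exact absurd h' (pow_ne_zero 3 hr1)
  have ha2 : σ/4 - a^2 = 0 := by
    rcases mul_eq_zero.mp hC4 with h' | h'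
    · exact h'
    · exact absurd h' (pow_ne_zero 4 hr1)
  by_cases ha : a = 0
  · apply hne
    have hb0 : b = 0 := by
      have h' : b * (enormFin shat - enormFin sstar) = 0 := by
        linear_combination hpr1 - hpr2 - ((enormFin shat)^2 - (enormFin sstar)^2) * ha
      rcases mul_eq_zero.mp h' with h'' | h''
      · exact h''
      · exact absurd (sub_eq_zero.mp h'') hr12
    constructor
    · have : a^2 = 0 := by rw [ha]; ring
      linarith
    · have : a*b = 0 := by rw [ha]; ring
      linarith
  · -- a ≠ 0
    have hb : b = -(a*(enormFin shat + enormFin sstar)) := by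
      have h' : (enormFin shat - enormFin sstar) * (a*(enormFin shat + enormFin sstar) + b) = 0 := by
        linear_combination hpr1 - hpr2
      have h'' := (mul_eq_zero.mp h').resolve_left (sub_ne_zero.mpr hr12)
      linarith
    have hc : c = a * enormFin shat * enormFin sstar := by
      linear_combination hpr1 - enormFin shat * hb
    have hKne : 2*b*c ≠ 0 := by
      have hK : 2*b*c = -(2*a^2*(enormFin shat)*(enormFin sstar)*(enormFin shat + enormFin sstar)) := by
        rw [hb, hc]; ring
      have ha2p : 0 < a^2 := lt_of_le_of_ne (sq_nonneg a) (Ne.symm (pow_ne_zero 2 ha))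
      have hpos : 0 < 2*a^2*(enormFin shat)*(enormFin sstar)*(enormFin shat + enormFin sstar) :=
        mul_pos (mul_pos (mul_pos (mul_pos two_pos ha2p) hr1pos) hr2pos)
          (by linarith : (0:ℝ) < enormFin shat + enormFin sstar)
      rw [hK]
      intro hzero
      rw [neg_eq_zero] at hzero
      exact absurd hzero (ne_of_gt hpos)
    -- segment setup
    set w : Fin n → ℝ := shat - sstar with hwdef
    set sl : ℝ → (Fin n → ℝ) := fun l => sstar + l • w with hsldef
    have hcons : ∀ l : ℝ, (Fin.cons 1 (sl l) : Fin (n+1) → ℝ) =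
        (Fin.cons 1 sstar) + l • ((Fin.cons 1 shat) - (Fin.cons 1 sstar)) := by
      intro l; funext i
      refine Fin.cases ?_ (fun j => ?_) i <;>
        simp [hsldef, hwdef, Pi.add_apply, Pi.smul_apply, Pi.sub_apply, smul_eq_mul] <;> ring
    have hQexp : ∀ l : ℝ,
        ((Fin.cons 1 sstar : Fin (n+1) → ℝ) + l • ((Fin.cons 1 shat) - (Fin.cons 1 sstar))) ⬝ᵥ
          X *ᵥ ((Fin.cons 1 sstar : Fin (n+1) → ℝ) + l • ((Fin.cons 1 shat) - (Fin.cons 1 sstar))) =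
        (Fin.cons 1 sstar : Fin (n+1) → ℝ) ⬝ᵥ X *ᵥ (Fin.cons 1 sstar : Fin (n+1) → ℝ)
        + (((Fin.cons 1 shat : Fin (n+1) → ℝ) - Fin.cons 1 sstar) ⬝ᵥ X *ᵥ (Fin.cons 1 sstar : Fin (n+1) → ℝ)
            + (Fin.cons 1 sstar : Fin (n+1) → ℝ) ⬝ᵥ X *ᵥ ((Fin.cons 1 shat : Fin (n+1) → ℝ) - Fin.cons 1 sstar)) * l
        + (((Fin.cons 1 shat : Fin (n+1) → ℝ) - Fin.cons 1 sstar) ⬝ᵥ X *ᵥ ((Fin.cons 1 shat : Fin (n+1) → ℝ) - Fin.cons 1 sstar)) * l^2 := by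
      intro l
      simp only [mulVec_add, mulVec_smul, dotProduct_add, add_dotProduct,
        dotProduct_smul, smul_dotProduct, smul_eq_mul]
      ring
    have hxh : (Fin.cons 1 sstar : Fin (n+1) → ℝ) + (1:ℝ) • ((Fin.cons 1 shat) - (Fin.cons 1 sstar)) = Fin.cons 1 shat := by
      simp
    have hSA0 : ((Fin.cons 1 shat : Fin (n+1) → ℝ) - Fin.cons 1 sstar) ⬝ᵥ X *ᵥ ((Fin.cons 1 shat : Fin (n+1) → ℝ) - Fin.cons 1 sstar) = 0 ∧
        ((Fin.cons 1 shat : Fin (n+1) → ℝ) - Fin.cons 1 sstar) ⬝ᵥ X *ᵥ (Fin.cons 1 sstar : Fin (n+1) → ℝ)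
          + (Fin.cons 1 sstar : Fin (n+1) → ℝ) ⬝ᵥ X *ᵥ ((Fin.cons 1 shat : Fin (n+1) → ℝ) - Fin.cons 1 sstar) = 0 := by
      have e1 : _ := hQexp 1
      rw [hxh, hQhat, hQstar] at e1
      have ehalf := hQexp (1/2)
      have eneg := hQexp (-1)
      rw [hQstar] at ehalf eneg
      have ghalf := hQnn ((Fin.cons 1 sstar : Fin (n+1) → ℝ) + (1/2 : ℝ) • ((Fin.cons 1 shat) - (Fin.cons 1 sstar)))
      have gneg := hQnn ((Fin.cons 1 sstar : Fin (n+1) → ℝ) + (-1 : ℝ) • ((Fin.cons 1 shat) - (Fin.cons 1 sstar)))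
      rw [ehalf] at ghalf
      rw [eneg] at gneg
      constructor <;> nlinarith [e1, ghalf, gneg]
    obtain ⟨hSA, hSB⟩ := hSA0
    have hQseg : ∀ l : ℝ, (Fin.cons 1 (sl l)) ⬝ᵥ X *ᵥ (Fin.cons 1 (sl l)) = 0 := by
      intro l
      rw [hcons l, hQexp l, hQstar, hSA, hSB]
      ring
    -- norm along segment
    have hslsq : ∀ l : ℝ, (enormFin (sl l))^2 =
        (enormFin sstar)^2 + (sstar ⬝ᵥ w + w ⬝ᵥ sstar)*l + (w ⬝ᵥ w)*l^2 := by
      intro l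
      have h0 : (enormFin (sl l))^2 = (sl l) ⬝ᵥ (sl l) := by
        simp only [enormFin]; exact Real.sq_sqrt (dot_self_nonneg_s15 _)
      rw [h0]
      have : (sl l) ⬝ᵥ (sl l) = (sstar + l • w) ⬝ᵥ (sstar + l • w) := by rw [hsldef]
      rw [this]
      simp only [dotProduct_add, add_dotProduct, dotProduct_smul, smul_dotProduct,
        smul_eq_mul]
      rw [hr2sq]
      ring
    have hslnn : ∀ l : ℝ, 0 ≤ enormFin (sl l) := fun l => Real.sqrt_nonneg _
    -- Mfun along the segment
    have hMseg : ∀ l : ℝ, Mfun f0 g H β σ (sl l) =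
        f0 + ((g ⬝ᵥ sstar) + (g ⬝ᵥ w)*l)
        + (1/2)*((sstar ⬝ᵥ (H *ᵥ sstar)) + ((sstar ⬝ᵥ (H *ᵥ w)) + (w ⬝ᵥ (H *ᵥ sstar)))*l
            + (w ⬝ᵥ (H *ᵥ w))*l^2)
        + (β/6)*(enormFin (sl l))^3 + (σ/4)*(enormFin (sl l))^4 := by
      intro l
      have hsl : sl l = sstar + l • w := by rw [hsldef]
      simp only [Mfun, hsl]
      simp only [mulVec_add, mulVec_smul, dotProduct_add, add_dotProduct,
        dotProduct_smul, smul_dotProduct, smul_eq_mul]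
      ring
    -- the affine identity K * enormFin = quadratic in l
    have hE : ∀ l : ℝ, (2*b*c) * enormFin (sl l) =
        (f0 - μstar - c^2 + (g ⬝ᵥ sstar) + (1/2)*(sstar ⬝ᵥ (H *ᵥ sstar))
          - (b^2+2*a*c)*(enormFin sstar)^2)
        + ((g ⬝ᵥ w) + (1/2)*((sstar ⬝ᵥ (H *ᵥ w)) + (w ⬝ᵥ (H *ᵥ sstar)))
          - (b^2+2*a*c)*(sstar ⬝ᵥ w + w ⬝ᵥ sstar))*l
        + ((1/2)*(w ⬝ᵥ (H *ᵥ w)) - (b^2+2*a*c)*(w ⬝ᵥ w))*l^2 := by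
      intro l
      have h := hid (sl l)
      rw [hMseg l, hQseg l, hpev, hqz] at h
      have hsq := hslsq l
      linear_combination -h + (enormFin (sl l))^4 * ha2 + (enormFin (sl l))^3 * hb3
        - (b^2+2*a*c) * hsq
    -- abbreviate
    set K := 2*b*c with hKdef
    set E0 := f0 - μstar - c^2 + (g ⬝ᵥ sstar) + (1/2)*(sstar ⬝ᵥ (H *ᵥ sstar))
          - (b^2+2*a*c)*(enormFin sstar)^2 with hE0def
    set E1 := (g ⬝ᵥ w) + (1/2)*((sstar ⬝ᵥ (H *ᵥ w)) + (w ⬝ᵥ (H *ᵥ sstar)))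
          - (b^2+2*a*c)*(sstar ⬝ᵥ w + w ⬝ᵥ sstar) with hE1def
    set E2 := (1/2)*(w ⬝ᵥ (H *ᵥ w)) - (b^2+2*a*c)*(w ⬝ᵥ w) with hE2def
    have hE2poly : ∀ t : ℝ, 0 ≤ t →
        (E0^2 - K^2*(enormFin sstar)^2) + (2*E0*E1 - K^2*(sstar ⬝ᵥ w + w ⬝ᵥ sstar))*t
        + (E1^2 + 2*E0*E2 - K^2*(w ⬝ᵥ w))*t^2 + (2*E1*E2)*t^3 + (E2^2)*t^4 = 0 := by
      intro t _
      have h := hE t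
      have hsq := hslsq t
      linear_combination (-(K * enormFin (sl t)) - (E0 + E1*t + E2*t^2)) * h + K^2 * hsq
    obtain ⟨hc0', hc1', hc2', hc3', hc4'⟩ := poly4_coeffs _ _ _ _ _ hE2poly
    have he2 : E2 = 0 := by
      have : E2^2 = 0 := hc4'
      exact sq_eq_zero_iff.mp this
    have he1 : E1 = 0 := by
      by_contra he1
      have h := hE ((-K - E0)/E1)
      rw [he2] at h
      have hval : K * enormFin (sl ((-K - E0)/E1)) = -K := by
        rw [h]; field_simp; ring
      have hneg : enormFin (sl ((-K - E0)/E1)) = -1 := by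
        have : K * enormFin (sl ((-K - E0)/E1)) = K * (-1) := by rw [hval]; ring
        exact mul_left_cancel₀ hKne this
      have := hslnn ((-K - E0)/E1)
      rw [hneg] at this
      linarith
    have hW : w ⬝ᵥ w = 0 := by
      have hK2 : K^2 ≠ 0 := pow_ne_zero 2 hKne
      have : K^2 * (w ⬝ᵥ w) = 0 := by
        rw [he1, he2] at hc2'
        linarith [hc2']
      exact (mul_eq_zero.mp this).resolve_left hK2
    have hw0 : w = 0 := dotProduct_self_eq_zero.mp hW
    have hss : shat = sstar := by
      have := hw0
      rw [hwdef] at this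
      exact sub_eq_zero.mp this
    exact hr12 (by rw [hss])
end
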